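/- Let F be a finite field of order Q and k ≥ 2, and let α ∈ F. The character χ_v of F^k (where v ∈ F^k and χ_v(u) = e(tr(⟨v,u⟩))) satisfies χ_v(α·f) = χ_v(x·f) for all polynomials f of degree less than k−1 (identifying polynomials with coefficient vectors) if and only if v = β·(1, α, α², ..., α^(k-1)) for some β ∈ F. -/

import Mathlib

open Finset

/-- Multiplication by `x`: a polynomial of degree `< k-1` becomes one of degree `< k`. -/
def shiftc {F : Type*} [Zero F] {k : ℕ} (f : Fin (k - 1) → F) : Fin k → F :=
  fun i => if h : 0 < (i : ℕ) ∧ (i : ℕ) - 1 < k - 1 then f ⟨(i : ℕ) - 1, h.2⟩ else 0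

/-- The natural inclusion of polynomials of degree `< k-1` into those of degree `< k`. -/
def embedc {F : Type*} [Zero F] {k : ℕ} (f : Fin (k - 1) → F) : Fin k → F :=
  fun i => if h : (i : ℕ) < k - 1 then f ⟨(i : ℕ), h⟩ else 0

theorem stmt7 {F : Type*} [Field F] [Fintype F] (p Q k : ℕ)
    [Fact p.Prime] [CharP F p] [Algebra (ZMod p) F]
    (hQ : Fintype.card F = Q) (hk : 2 ≤ k) (v : Fin k → F) (α : F) :
    let e : ZMod p → ℂ := fun t => Complex.exp (2 * Real.pi * Complex.I * (t.val : ℂ) / p)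
    let χ : (Fin k → F) → ℂ :=
      fun u => e (Algebra.trace (ZMod p) F (∑ i : Fin k, v i * u i))
    ((∀ f : Fin (k - 1) → F, χ (fun i => α * embedc f i) = χ (shiftc f)) ↔
      ∃ β : F, v = fun i : Fin k => β * α ^ (i : ℕ)) := by
  intro e χ
  obtain ⟨m, rfl⟩ : ∃ m, k = m + 2 := ⟨k - 2, by omega⟩
  have hp : p.Prime := Fact.out
  -- injectivity of e
  have e_inj : Function.Injective e := by
    intro a b hab
    have hroot := Complex.isPrimitiveRoot_exp p hp.ne_zero
    have hpow : ∀ t : ZMod p,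
        e t = Complex.exp (2 * Real.pi * Complex.I / p) ^ (t.val) := by
      intro t
      simp only [e]
      rw [← Complex.exp_nat_mul]
      congr 1
      ring
    rw [hpow, hpow] at hab
    exact ZMod.val_injective p (hroot.pow_inj (ZMod.val_lt a) (ZMod.val_lt b) hab)
  -- sum reindexing lemmas
  have hemb : ∀ (w : Fin (m + 2) → F) (f : Fin (m + 2 - 1) → F),
      ∑ i : Fin (m + 2), w i * embedc f i
        = ∑ j : Fin (m + 1), w j.castSucc * f j := by
    intro w f
    rw [Fin.sum_univ_castSucc]
    have h1 : embedc f (Fin.last (m + 1)) = 0 := by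
      simp [embedc, Fin.last]
    rw [h1, mul_zero, add_zero]
    refine Finset.sum_congr rfl fun j _ => ?_
    congr 1
    show (if h : ((j.castSucc : Fin (m+2)) : ℕ) < m + 2 - 1 then
        f ⟨((j.castSucc : Fin (m+2)) : ℕ), h⟩ else 0) = f j
    rw [dif_pos (by simp; exact Nat.le_of_lt_succ j.isLt)]
    exact congrArg f (Fin.ext (by simp))
  have hshift : ∀ (w : Fin (m + 2) → F) (f : Fin (m + 2 - 1) → F),
      ∑ i : Fin (m + 2), w i * shiftc f i
        = ∑ j : Fin (m + 1), w j.succ * f j := by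
    intro w f
    rw [Fin.sum_univ_succ]
    have h0 : shiftc f (0 : Fin (m + 2)) = 0 := by
      simp [shiftc]
    rw [h0, mul_zero, zero_add]
    refine Finset.sum_congr rfl fun j _ => ?_
    congr 1
    show (if h : 0 < ((j.succ : Fin (m+2)) : ℕ) ∧ ((j.succ : Fin (m+2)) : ℕ) - 1 < m + 2 - 1 then
        f ⟨((j.succ : Fin (m+2)) : ℕ) - 1, h.2⟩ else 0) = f j
    rw [dif_pos (show _ ∧ _ from ⟨by simp [Fin.val_succ], by simp [Fin.val_succ]; exact Nat.le_of_lt_succ j.isLt⟩)]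
    exact congrArg f (Fin.ext (by simp [Fin.val_succ]))
  constructor
  · intro h
    -- recurrence
    have key : ∀ j : Fin (m + 1), v j.succ = α * v j.castSucc := by
      intro j
      have hT : ∀ x : F,
          Algebra.trace (ZMod p) F ((α * v j.castSucc - v j.succ) * x) = 0 := by
        intro x
        have hf := h (Pi.single j x)
        simp only [χ] at hf
        have htr := e_inj hf
        have h1 : ∑ i : Fin (m + 2), v i * (α * embedc (Pi.single j x) i)
            = α * v j.castSucc * x := by
          have : ∑ i : Fin (m + 2), v i * (α * embedc (Pi.single j x) i)
              = ∑ i : Fin (m + 2), (fun i => α * v i) i * embedc (Pi.single j x) i := by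
            refine Finset.sum_congr rfl fun i _ => by ring
          rw [this, hemb]
          simp [Pi.single_apply, mul_ite, Finset.sum_ite_eq']
        have h2 : ∑ i : Fin (m + 2), v i * shiftc (Pi.single j x) i
            = v j.succ * x := by
          rw [hshift]
          simp [Pi.single_apply, mul_ite, Finset.sum_ite_eq']
        rw [h1, h2] at htr
        rw [sub_mul, map_sub, htr, sub_self]
      have hc : α * v j.castSucc - v j.succ = 0 := by
        refine (traceForm_nondegenerate (ZMod p) F).1 _ fun x => ?_
        simpa only [Algebra.traceForm_apply] using hT x
      exact (sub_eq_zero.mp hc).symm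
    have gen : ∀ n (hn : n < m + 2), v ⟨n, hn⟩ = v 0 * α ^ n := by
      intro n
      induction n with
      | zero => intro hn; simp [show (⟨0, hn⟩ : Fin (m + 2)) = 0 from rfl]
      | succ n ih =>
        intro hn
        have hn' : n < m + 1 := by omega
        have hkey := key ⟨n, hn'⟩
        have hsucc : (⟨n, hn'⟩ : Fin (m + 1)).succ = ⟨n + 1, hn⟩ := rfl
        have hcast : (⟨n, hn'⟩ : Fin (m + 1)).castSucc = ⟨n, by omega⟩ := rfl
        rw [hsucc, hcast] at hkey
        rw [hkey, ih (by omega)]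
        ring
    refine ⟨v 0, funext fun i => ?_⟩
    have := gen i.val i.isLt
    rwa [Fin.eta] at this
  · rintro ⟨β, rfl⟩
    intro f
    simp only [χ]
    congr 2
    have h1 : ∑ i : Fin (m + 2), β * α ^ (i : ℕ) * (α * embedc f i)
        = ∑ i : Fin (m + 2), (fun i : Fin (m+2) => α * (β * α ^ (i : ℕ))) i * embedc f i := by
      refine Finset.sum_congr rfl fun i _ => by ring
    rw [h1, hemb, hshift]
    refine Finset.sum_congr rfl fun j _ => ?_
    rw [Fin.coe_castSucc, Fin.val_succ]
    ring
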